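/- arXiv:1806.07274 — 2 statements merged into one kernel-verified Lean document; each statement's English description precedes it below -/
import Mathlib

section
/- (Lemma 1(iii)) Fix a D×D real unit lower triangular matrix L and indices i > j. For t ∈ ℝ let L(t) be the matrix obtained from L by replacing the (i,j) entry with t, and set Σ(t) = L(t) L(t)ᵀ, Λ(t) = diag(Σ(t)), R(t) = Λ(t)^{-1/2} Σ(t) Λ(t)^{-1/2}. Then the function t ↦ log det R(t) is differentiable at t = L_{ij} with derivative ∂ log|R|/∂L_{ij} = -2 L_{ij} / (Σ_{k=1}^{i} L_{ik}²). -/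
open Matrix Finset

/-- Lemma 1(iii): fix a unit lower triangular `L` and indices `j < i`.
Perturbing the `(i,j)` entry of `L` to `t`, forming `Σ(t) = L(t) L(t)ᵀ`,
`Λ(t) = diag(Σ(t))` and `R(t) = Λ(t)^{-1/2} Σ(t) Λ(t)^{-1/2}`, the map
`t ↦ log det R(t)` is differentiable at `t = L i j` with derivative
`-2 L i j / ∑_{k ≤ i} L i k ^ 2`. -/
theorem hasDerivAt_log_det_correlation
    (D : ℕ) (hD : 0 < D) (L : Matrix (Fin D) (Fin D) ℝ)
    (hlow : ∀ i j : Fin D, i < j → L i j = 0)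
    (hdiag : ∀ i : Fin D, L i i = 1)
    (i j : Fin D) (hij : j < i)
    (Lt : ℝ → Matrix (Fin D) (Fin D) ℝ)
    (hLt : ∀ t k l, Lt t k l = if k = i ∧ l = j then t else L k l)
    (St : ℝ → Matrix (Fin D) (Fin D) ℝ)
    (hSt : ∀ t, St t = Lt t * (Lt t)ᵀ)
    (Rt : ℝ → Matrix (Fin D) (Fin D) ℝ)
    (hRt : ∀ t, Rt t = Matrix.diagonal (fun k => (Real.sqrt (St t k k))⁻¹) *
      St t * Matrix.diagonal (fun k => (Real.sqrt (St t k k))⁻¹)) :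
    HasDerivAt (fun t => Real.log ((Rt t).det))
      (-2 * L i j / ∑ k ∈ Finset.Iic i, (L i k) ^ 2) (L i j) := by
  -- diagonal entries of St
  have hStd : ∀ t k, St t k k = ∑ l, (Lt t k l) ^ 2 := by
    intro t k
    simp [hSt, Matrix.mul_apply, Matrix.transpose_apply, sq]
  have hij' : i ≠ j := ne_of_gt hij
  -- entries of Lt
  have hLtdiag : ∀ t k, Lt t k k = 1 := by
    intro t k
    rw [hLt]
    rw [if_neg (by rintro ⟨rfl, rfl⟩; exact hij' rfl)]
    exact hdiag k
  have hLtlow : ∀ t k l, k < l → Lt t k l = 0 := by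
    intro t k l hkl
    rw [hLt]
    rw [if_neg (by rintro ⟨rfl, rfl⟩; exact absurd hkl (not_lt.2 hij.le))]
    exact hlow k l hkl
  -- positivity of diagonal of St
  have hpos : ∀ t k, 0 < St t k k := by
    intro t k
    rw [hStd]
    have h1 : (Lt t k k) ^ 2 ≤ ∑ l, (Lt t k l) ^ 2 :=
      Finset.single_le_sum (f := fun l => (Lt t k l) ^ 2) (fun l _ => sq_nonneg _)
        (Finset.mem_univ k)
    rw [hLtdiag] at h1
    linarith
  -- det Lt = 1
  have hdetLt : ∀ t, (Lt t).det = 1 := by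
    intro t
    rw [Matrix.det_of_lowerTriangular _ (fun k l hkl => hLtlow t k l (by exact_mod_cast hkl))]
    simp [hLtdiag]
  -- det St = 1
  have hdetSt : ∀ t, (St t).det = 1 := by
    intro t
    rw [hSt, Matrix.det_mul, Matrix.det_transpose, hdetLt, mul_one]
  -- det Rt = ∏ (St t k k)⁻¹
  have hdetRt : ∀ t, (Rt t).det = ∏ k, (St t k k)⁻¹ := by
    intro t
    rw [hRt, Matrix.det_mul, Matrix.det_mul, Matrix.det_diagonal, hdetSt, mul_one,
      ← Finset.prod_mul_distrib]
    refine Finset.prod_congr rfl fun k _ => ?_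
    rw [← mul_inv, Real.mul_self_sqrt (hpos t k).le]
  -- c
  set c : ℝ := ∑ l ∈ Finset.univ.erase j, (L i l) ^ 2 with hc
  have hci : St (L i j) i i = (L i j) ^ 2 + c := by
    rw [hStd, ← Finset.add_sum_erase _ _ (Finset.mem_univ j)]
    congr 1
    · rw [hLt, if_pos ⟨rfl, rfl⟩]
    · refine Finset.sum_congr rfl fun l hl => ?_
      rw [hLt, if_neg (by rintro ⟨-, rfl⟩; exact (Finset.mem_erase.1 hl).1 rfl)]
  have hcit : ∀ t, St t i i = t ^ 2 + c := by
    intro t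
    rw [hStd, ← Finset.add_sum_erase _ _ (Finset.mem_univ j)]
    congr 1
    · rw [hLt, if_pos ⟨rfl, rfl⟩]
    · refine Finset.sum_congr rfl fun l hl => ?_
      rw [hLt, if_neg (by rintro ⟨-, rfl⟩; exact (Finset.mem_erase.1 hl).1 rfl)]
  have hcpos : 0 < c := by
    have hii : i ∈ Finset.univ.erase j := Finset.mem_erase.2 ⟨hij'.symm.symm, Finset.mem_univ i⟩
    have h1 : (L i i) ^ 2 ≤ c :=
      Finset.single_le_sum (f := fun l => (L i l) ^ 2) (fun l _ => sq_nonneg _) hii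
    rw [hdiag] at h1
    linarith
  -- off-i diagonal entries are constant
  have hconst : ∀ t k, k ≠ i → St t k k = St 0 k k := by
    intro t k hk
    rw [hStd, hStd]
    refine Finset.sum_congr rfl fun l _ => ?_
    rw [hLt, hLt, if_neg (by rintro ⟨rfl, _⟩; exact hk rfl),
      if_neg (by rintro ⟨rfl, _⟩; exact hk rfl)]
  -- the function equals a simple one
  set C : ℝ := -∑ k ∈ Finset.univ.erase i, Real.log (St 0 k k) with hC
  have hfun : ∀ t, Real.log ((Rt t).det) = -Real.log (t ^ 2 + c) + C := by
    intro t
    rw [hdetRt, Real.log_prod (fun k _ => inv_ne_zero (hpos t k).ne')]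
    rw [← Finset.add_sum_erase _ _ (Finset.mem_univ i)]
    rw [Real.log_inv, hcit, hC]
    congr 1
    rw [← Finset.sum_neg_distrib]
    refine Finset.sum_congr rfl fun k hk => ?_
    rw [Real.log_inv, hconst t k (Finset.mem_erase.1 hk).1]
  -- derivative
  have hsum : ∑ k ∈ Finset.Iic i, (L i k) ^ 2 = (L i j) ^ 2 + c := by
    have h1 : ∑ k ∈ Finset.Iic i, (L i k) ^ 2 = ∑ k, (L i k) ^ 2 := by
      refine Finset.sum_subset (Finset.subset_univ _) fun k _ hk => ?_
      rw [hlow i k (by simpa using hk), zero_pow two_ne_zero]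
    rw [h1, ← Finset.add_sum_erase _ _ (Finset.mem_univ j)]
  have hd1 : HasDerivAt (fun t : ℝ => t ^ 2 + c) (2 * L i j) (L i j) := by
    simpa using (hasDerivAt_pow 2 (L i j)).add_const c
  have hne : (L i j) ^ 2 + c ≠ 0 := by positivity
  have hd2 := ((hd1.log hne).neg).add_const C
  have hfeq : (fun t => Real.log ((Rt t).det)) = fun t => -Real.log (t ^ 2 + c) + C :=
    funext hfun
  rw [hfeq, hsum]
  convert hd2 using 1
  · rfl
  · rfl
  · rfl
  · ring
end

section
/- The Cholesky-factor parameterisation of correlation matrices is injective: if L₁ and L₂ are D×D real unit lower triangular matrices such that Λ₁^{-1/2} L₁L₁ᵀ Λ₁^{-1/2} = Λ₂^{-1/2} L₂L₂ᵀ Λ₂^{-1/2}, where Λ_m = diag(L_m L_mᵀ) for m = 1, 2, then L₁ = L₂. -/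
open Matrix

/-- Injectivity of the Cholesky-factor parameterisation: if `L₁`, `L₂` are
unit lower triangular and the correlation matrices
`Λ_m^{-1/2} (L_m L_mᵀ) Λ_m^{-1/2}` (with `Λ_m = diag (L_m L_mᵀ)`) coincide,
then `L₁ = L₂`. -/
theorem cholesky_correlation_injective
    (D : ℕ) (hD : 0 < D)
    (L₁ L₂ : Matrix (Fin D) (Fin D) ℝ)
    (hlow₁ : ∀ i j : Fin D, i < j → L₁ i j = 0)
    (hdiag₁ : ∀ i : Fin D, L₁ i i = 1)
    (hlow₂ : ∀ i j : Fin D, i < j → L₂ i j = 0)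
    (hdiag₂ : ∀ i : Fin D, L₂ i i = 1)
    (heq : Matrix.diagonal (fun i => (Real.sqrt ((L₁ * L₁ᵀ) i i))⁻¹) * (L₁ * L₁ᵀ) *
        Matrix.diagonal (fun i => (Real.sqrt ((L₁ * L₁ᵀ) i i))⁻¹) =
      Matrix.diagonal (fun i => (Real.sqrt ((L₂ * L₂ᵀ) i i))⁻¹) * (L₂ * L₂ᵀ) *
        Matrix.diagonal (fun i => (Real.sqrt ((L₂ * L₂ᵀ) i i))⁻¹)) :
    L₁ = L₂ := by
  set A := L₁ * L₁ᵀ with hA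
  set B := L₂ * L₂ᵀ with hB
  have hAentry : ∀ i j, A i j = ∑ k, L₁ i k * L₁ j k := by
    intro i j; simp [hA, Matrix.mul_apply, Matrix.transpose_apply]
  have hBentry : ∀ i j, B i j = ∑ k, L₂ i k * L₂ j k := by
    intro i j; simp [hB, Matrix.mul_apply, Matrix.transpose_apply]
  have hApos : ∀ i, 0 < A i i := by
    intro i
    rw [hAentry]
    have h1 : (L₁ i i) * (L₁ i i) ≤ ∑ k, L₁ i k * L₁ i k :=
      Finset.single_le_sum (f := fun k => L₁ i k * L₁ i k)
        (fun k _ => mul_self_nonneg _) (Finset.mem_univ i)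
    nlinarith [hdiag₁ i]
  have hBpos : ∀ i, 0 < B i i := by
    intro i
    rw [hBentry]
    have h1 : (L₂ i i) * (L₂ i i) ≤ ∑ k, L₂ i k * L₂ i k :=
      Finset.single_le_sum (f := fun k => L₂ i k * L₂ i k)
        (fun k _ => mul_self_nonneg _) (Finset.mem_univ i)
    nlinarith [hdiag₂ i]
  set a : Fin D → ℝ := fun i => Real.sqrt (A i i) with ha
  set b : Fin D → ℝ := fun i => Real.sqrt (B i i) with hb
  have hapos : ∀ i, 0 < a i := fun i => Real.sqrt_pos.mpr (hApos i)
  have hbpos : ∀ i, 0 < b i := fun i => Real.sqrt_pos.mpr (hBpos i)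
  have heq' : ∀ i j, (a i)⁻¹ * A i j * (a j)⁻¹ = (b i)⁻¹ * B i j * (b j)⁻¹ := by
    intro i j
    have := congrFun (congrFun heq i) j
    simpa [Matrix.mul_apply, Matrix.diagonal, Finset.mul_sum, Finset.sum_mul,
      Matrix.mul_diagonal, Matrix.diagonal_mul] using this
  set r : Fin D → Fin D → ℝ := fun i j => L₁ i j * (a i)⁻¹ with hr
  set s : Fin D → Fin D → ℝ := fun i j => L₂ i j * (b i)⁻¹ with hs
  have key : ∀ i j, ∑ k, r i k * r j k = ∑ k, s i k * s j k := by
    intro i j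
    have h1 : ∑ k, r i k * r j k = (a i)⁻¹ * A i j * (a j)⁻¹ := by
      rw [hAentry, Finset.mul_sum, Finset.sum_mul]
      apply Finset.sum_congr rfl
      intro k _; simp [hr]; ring
    have h2 : ∑ k, s i k * s j k = (b i)⁻¹ * B i j * (b j)⁻¹ := by
      rw [hBentry, Finset.mul_sum, Finset.sum_mul]
      apply Finset.sum_congr rfl
      intro k _; simp [hs]; ring
    rw [h1, h2, heq' i j]
  have rzero : ∀ i j, i < j → r i j = 0 := fun i j h => by simp [hr, hlow₁ i j h]
  have szero : ∀ i j, i < j → s i j = 0 := fun i j h => by simp [hs, hlow₂ i j h]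
  have rpos : ∀ i, 0 < r i i := fun i => by
    simp [hr, hdiag₁ i]; exact hapos i
  have spos : ∀ i, 0 < s i i := fun i => by
    simp [hs, hdiag₂ i]; exact hbpos i
  have hsplit : ∀ (i : Fin D) (f : Fin D → ℝ), (∀ k, i < k → f k = 0) →
      ∑ k, f k = f i + ∑ k ∈ Finset.Iio i, f k := by
    intro i f hf
    have h1 : ∑ k, f k = ∑ k ∈ Finset.Iic i, f k :=
      (Finset.sum_subset (Finset.subset_univ _)
        (fun x _ hx => hf x (by simpa using hx))).symm
    rw [h1, ← Finset.Iio_insert, Finset.sum_insert (by simp)]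
  have main : ∀ n : ℕ, ∀ i j : Fin D, i.val + j.val = n → r i j = s i j := by
    intro n
    induction n using Nat.strong_induction_on with
    | _ n ih =>
      intro i j hn
      rcases lt_trichotomy i j with hij | hij | hij
      · rw [rzero i j hij, szero i j hij]
      · subst hij
        have hkey := key i i
        rw [hsplit i _ (fun k hk => by rw [rzero i k hk, zero_mul]),
            hsplit i _ (fun k hk => by rw [szero i k hk, zero_mul])] at hkey
        have hsum : ∑ k ∈ Finset.Iio i, r i k * r i k
            = ∑ k ∈ Finset.Iio i, s i k * s i k := by
          apply Finset.sum_congr rfl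
          intro k hk
          have hk' : k < i := Finset.mem_Iio.mp hk
          rw [ih (i.val + k.val) (by omega) i k rfl]
        have h2 : r i i * r i i = s i i * s i i := by linarith
        nlinarith [rpos i, spos i]
      · -- j < i
        have hkey := key i j
        rw [hsplit j _ (fun k hk => by rw [rzero j k hk, mul_zero]),
            hsplit j _ (fun k hk => by rw [szero j k hk, mul_zero])] at hkey
        have hsum : ∑ k ∈ Finset.Iio j, r i k * r j k
            = ∑ k ∈ Finset.Iio j, s i k * s j k := by
          apply Finset.sum_congr rfl
          intro k hk
          have hk' : k < j := Finset.mem_Iio.mp hk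
          have h1 : r i k = s i k := ih (i.val + k.val) (by omega) i k rfl
          have h2 : r j k = s j k := ih (j.val + k.val) (by omega) j k rfl
          rw [h1, h2]
        have hjj : r j j = s j j := ih (j.val + j.val) (by omega) j j rfl
        have h2 : r i j * r j j = s i j * s j j := by linarith
        rw [hjj] at h2
        exact mul_right_cancel₀ (ne_of_gt (spos j)) h2
  have hrs : ∀ i j, r i j = s i j := fun i j => main (i.val + j.val) i j rfl
  have hab : ∀ i, a i = b i := by
    intro i
    have := hrs i i
    simp only [hr, hs, hdiag₁ i, hdiag₂ i, one_mul] at this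
    exact inv_injective this
  ext i j
  have := hrs i j
  simp only [hr, hs, hab i] at this
  exact mul_right_cancel₀ (ne_of_gt (inv_pos.mpr (hbpos i))) this
end
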